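/- The automorphism group of the 3-dimensional algebra T³*₀₅ over ℂ (basis e₁,e₂,e₃ with nonzero products e₁e₁ = e₂, e₁e₂ = e₃) consists exactly of the linear maps whose matrix in the basis (e₁,e₂,e₃) has the form [[x,0,0],[y,x²,0],[z,xy,x³]] with x ≠ 0. -/
import Mathlib


/-- T³*₀₅: basis `e₁,e₂,e₃`, nonzero products `e₁e₁ = e₂`, `e₁e₂ = e₃`. -/
def mulT3s05 (a b : Fin 3 → ℂ) : Fin 3 → ℂ :=
  (a 0 * b 0) • (Pi.single 1 1 : Fin 3 → ℂ) + (a 0 * b 1) • (Pi.single 2 1 : Fin 3 → ℂ)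

lemma decomp13 (v : Fin 3 → ℂ) :
    v = v 0 • (Pi.single 0 1 : Fin 3 → ℂ) + v 1 • (Pi.single 1 1 : Fin 3 → ℂ) + v 2 • (Pi.single 2 1 : Fin 3 → ℂ) := by
  funext i
  fin_cases i <;> simp [Pi.single_apply]

lemma mul13_e1e1 : mulT3s05 (Pi.single 0 1) (Pi.single 0 1) = (Pi.single 1 1 : Fin 3 → ℂ) := by
  funext i; fin_cases i <;> simp [mulT3s05, Pi.single_apply]

lemma mul13_e1e2 : mulT3s05 (Pi.single 0 1) (Pi.single 1 1) = (Pi.single 2 1 : Fin 3 → ℂ) := by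
  funext i; fin_cases i <;> simp [mulT3s05, Pi.single_apply]

/-- The automorphisms of T³*₀₅ are exactly the linear bijections with matrix
`[[x,0,0],[y,x²,0],[z,xy,x³]]` with `x ≠ 0`. -/
theorem stmt13 (φ : (Fin 3 → ℂ) ≃ₗ[ℂ] (Fin 3 → ℂ)) :
    (∀ a b, φ (mulT3s05 a b) = mulT3s05 (φ a) (φ b)) ↔
    ∃ x y z : ℂ, x ≠ 0 ∧
      φ (Pi.single 0 1) = x • (Pi.single 0 1 : Fin 3 → ℂ) + y • (Pi.single 1 1 : Fin 3 → ℂ)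
        + z • (Pi.single 2 1 : Fin 3 → ℂ) ∧
      φ (Pi.single 1 1) = (x ^ 2) • (Pi.single 1 1 : Fin 3 → ℂ)
        + (x * y) • (Pi.single 2 1 : Fin 3 → ℂ) ∧
      φ (Pi.single 2 1) = (x ^ 3) • (Pi.single 2 1 : Fin 3 → ℂ) := by
  constructor
  · intro h
    set x := φ (Pi.single 0 1) 0 with hxdef
    set y := φ (Pi.single 0 1) 1 with hydef
    set z := φ (Pi.single 0 1) 2 with hzdef
    have h2 : φ (Pi.single 1 1) = (x * x) • (Pi.single 1 1 : Fin 3 → ℂ)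
        + (x * y) • (Pi.single 2 1 : Fin 3 → ℂ) := by
      have := h (Pi.single 0 1) (Pi.single 0 1)
      rw [mul13_e1e1] at this
      rw [this]; rfl
    have hx : x ≠ 0 := by
      intro hx0
      have : φ (Pi.single 1 1) = 0 := by rw [h2, hx0]; simp
      have h0 : (Pi.single 1 1 : Fin 3 → ℂ) = 0 :=
        φ.injective (this.trans (map_zero φ).symm)
      have := congrFun h0 1
      simp at this
    have h3 : φ (Pi.single 2 1) = (x ^ 3) • (Pi.single 2 1 : Fin 3 → ℂ) := by
      have := h (Pi.single 0 1) (Pi.single 1 1)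
      rw [mul13_e1e2] at this
      rw [this]
      have e0 : φ (Pi.single 1 1) 0 = 0 := by rw [h2]; simp [Pi.single_apply]
      have e1 : φ (Pi.single 1 1) 1 = x * x := by rw [h2]; simp [Pi.single_apply]
      show (x * φ (Pi.single 1 1) 0) • _ + (x * φ (Pi.single 1 1) 1) • _ = _
      rw [e0, e1]
      funext i; fin_cases i <;> simp [Pi.single_apply] <;> ring
    refine ⟨x, y, z, hx, ?_, ?_, h3⟩
    · exact decomp13 _
    · rw [h2]; ring_nf
  · rintro ⟨x, y, z, hx, h1, h2, h3⟩ a b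
    have ha := congrArg φ (decomp13 a)
    have hb := congrArg φ (decomp13 b)
    rw [map_add, map_add, map_smul, map_smul, map_smul, h1, h2, h3] at ha hb
    have ha0 : φ a 0 = a 0 * x := by rw [ha]; simp [Pi.single_apply]
    have ha1 : φ a 1 = a 0 * y + a 1 * x ^ 2 := by rw [ha]; simp [Pi.single_apply]
    have hb0 : φ b 0 = b 0 * x := by rw [hb]; simp [Pi.single_apply]
    have hb1 : φ b 1 = b 0 * y + b 1 * x ^ 2 := by rw [hb]; simp [Pi.single_apply]
    have hm : mulT3s05 a b = (a 0 * b 0) • (Pi.single 1 1 : Fin 3 → ℂ)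
        + (a 0 * b 1) • (Pi.single 2 1 : Fin 3 → ℂ) := rfl
    rw [hm, map_add, map_smul, map_smul, h2, h3]
    show _ = (φ a 0 * φ b 0) • _ + (φ a 0 * φ b 1) • _
    rw [ha0, hb0, hb1]
    funext i; fin_cases i <;> simp [Pi.single_apply] <;> ring
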